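/- arXiv:1503.01582 — 3 statements merged into one kernel-verified Lean document; each statement's English description precedes it below -/
import Mathlib

section
/- For every bounded measurable K ⊆ ℝⁿ, every j ∈ {1,…,n} and R > 0, the quantity θ^j_K(R) := (√2 ⌊n/2+1⌋/√(2π)ⁿ) · inf_{t>0} [ ((R+t)/t)^{n/2} Σ_{i=0}^{⌊n/2+1⌋} (tⁱ/i!) ( Σ_{(j₁,…,j_i)} ∫_K |ξ_j|² ∏_{k=1}^i |ξ_{j_k}|² dξ )^{1/2} ] satisfies θ^j_K(R) ≤ (1/√πⁿ) √(2ν(K)) ⌊n/2+1⌋ d(K) exp(R d(K) √n). -/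
open MeasureTheory

/-- the quantity `θ^j_K(R)` is bounded by
`(1/√πⁿ) √(2ν(K)) ⌊n/2+1⌋ d(K) exp(R d(K) √n)`. -/
theorem stmt4 (n : ℕ) (hn : 0 < n) (K : Set (EuclideanSpace ℝ (Fin n)))
    (hKb : Bornology.IsBounded K) (hKm : MeasurableSet K) (j : Fin n) (R : ℝ) (hR : 0 < R) :
    (Real.sqrt 2 * ((n / 2 + 1 : ℕ) : ℝ) / Real.sqrt (2 * Real.pi) ^ n) *
      (⨅ t : {t : ℝ // 0 < t},
        ((R + t.1) / t.1) ^ ((n : ℝ) / 2) *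
          ∑ i ∈ Finset.range (n / 2 + 2),
            t.1 ^ i / (Nat.factorial i : ℝ) *
              Real.sqrt (∑ g : Fin i → Fin n,
                ∫ ξ in K, |ξ j| ^ 2 * ∏ k : Fin i, |ξ (g k)| ^ 2))
    ≤ (1 / Real.sqrt Real.pi ^ n) * Real.sqrt (2 * (volume K).toReal) *
        ((n / 2 + 1 : ℕ) : ℝ) * (⨆ ξ : K, ‖(ξ : EuclideanSpace ℝ (Fin n))‖) *
        Real.exp (R * (⨆ ξ : K, ‖(ξ : EuclideanSpace ℝ (Fin n))‖) * Real.sqrt n) := by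
  set d : ℝ := ⨆ ξ : K, ‖(ξ : EuclideanSpace ℝ (Fin n))‖ with hd
  have hd0 : 0 ≤ d := Real.iSup_nonneg fun ξ => norm_nonneg _
  have hKfin : volume K < ⊤ := hKb.measure_lt_top
  set ν : ℝ := (volume K).toReal with hν
  have hν0 : 0 ≤ ν := ENNReal.toReal_nonneg
  have hbd : ∀ ξ ∈ K, ‖ξ‖ ≤ d := by
    intro ξ hξ
    obtain ⟨C, hC⟩ := hKb.exists_norm_le
    exact le_ciSup ⟨C, by rintro y ⟨ζ, rfl⟩; exact hC _ ζ.2⟩ (⟨ξ, hξ⟩ : K)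
  have hcoord : ∀ ξ ∈ K, ∀ i : Fin n, |ξ i| ≤ d := by
    intro ξ hξ i
    refine le_trans ?_ (hbd ξ hξ)
    rw [← Real.sqrt_sq_eq_abs, EuclideanSpace.norm_eq]
    refine Real.sqrt_le_sqrt ?_
    have := Finset.single_le_sum (f := fun i => ‖ξ i‖ ^ 2)
      (fun i _ => sq_nonneg _) (Finset.mem_univ i)
    simpa [Real.norm_eq_abs, sq_abs] using this
  -- key integral bound
  have key : ∀ (i : ℕ) (g : Fin i → Fin n),
      (∫ ξ in K, |ξ j| ^ 2 * ∏ k : Fin i, |ξ (g k)| ^ 2) ≤ d ^ (2 * (i + 1)) * ν := by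
    intro i g
    have hb : ∀ ξ ∈ K, ‖|ξ j| ^ 2 * ∏ k : Fin i, |ξ (g k)| ^ 2‖ ≤ d ^ (2 * (i + 1)) := by
      intro ξ hξ
      have h1 : |ξ j| ^ 2 ≤ d ^ 2 :=
        pow_le_pow_left₀ (abs_nonneg _) (hcoord ξ hξ j) 2
      have h2 : ∏ k : Fin i, |ξ (g k)| ^ 2 ≤ ∏ _k : Fin i, d ^ 2 :=
        Finset.prod_le_prod (fun k _ => sq_nonneg _)
          (fun k _ => pow_le_pow_left₀ (abs_nonneg _) (hcoord ξ hξ (g k)) 2)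
      have hnn : (0:ℝ) ≤ |ξ j| ^ 2 * ∏ k : Fin i, |ξ (g k)| ^ 2 :=
        mul_nonneg (sq_nonneg _) (Finset.prod_nonneg fun k _ => sq_nonneg _)
      rw [Real.norm_eq_abs, abs_of_nonneg hnn]
      calc |ξ j| ^ 2 * ∏ k : Fin i, |ξ (g k)| ^ 2
          ≤ d ^ 2 * ∏ _k : Fin i, d ^ 2 :=
            mul_le_mul h1 h2 (Finset.prod_nonneg fun k _ => sq_nonneg _) (sq_nonneg _)
        _ = d ^ (2 * (i + 1)) := by
            rw [Finset.prod_const, Finset.card_univ, Fintype.card_fin, ← pow_mul]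
            ring
    calc (∫ ξ in K, |ξ j| ^ 2 * ∏ k : Fin i, |ξ (g k)| ^ 2)
        ≤ ‖∫ ξ in K, |ξ j| ^ 2 * ∏ k : Fin i, |ξ (g k)| ^ 2‖ := le_abs_self _
      _ ≤ d ^ (2 * (i + 1)) * ν :=
          norm_setIntegral_le_of_norm_le_const hKfin hb
  -- bound on sqrt of the sum over multi-indices
  have sqrt_bd : ∀ i : ℕ,
      Real.sqrt (∑ g : Fin i → Fin n, ∫ ξ in K, |ξ j| ^ 2 * ∏ k : Fin i, |ξ (g k)| ^ 2)
        ≤ Real.sqrt ν * d * (Real.sqrt n * d) ^ i := by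
    intro i
    have hsum : (∑ g : Fin i → Fin n, ∫ ξ in K, |ξ j| ^ 2 * ∏ k : Fin i, |ξ (g k)| ^ 2)
        ≤ (Real.sqrt ν * d * (Real.sqrt n * d) ^ i) ^ 2 := by
      have hcard : (∑ g : Fin i → Fin n, ∫ ξ in K, |ξ j| ^ 2 * ∏ k : Fin i, |ξ (g k)| ^ 2)
          ≤ (Fintype.card (Fin i → Fin n)) • (d ^ (2 * (i + 1)) * ν) := by
        simpa [Finset.card_univ] using
          Finset.sum_le_card_nsmul Finset.univ _ _ (fun g _ => key i g)
      refine hcard.trans (le_of_eq ?_)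
      rw [Fintype.card_fun, Fintype.card_fin, Fintype.card_fin, nsmul_eq_mul]
      push_cast
      have hX : ((Real.sqrt n * d) ^ i) ^ 2 = ((n : ℝ) * d ^ 2) ^ i := by
        rw [← pow_mul, mul_comm i 2, pow_mul, mul_pow, Real.sq_sqrt (Nat.cast_nonneg n)]
      rw [mul_pow, mul_pow, Real.sq_sqrt hν0, hX, mul_pow, pow_mul d, pow_succ]
      ring
    have hrhs : 0 ≤ Real.sqrt ν * d * (Real.sqrt n * d) ^ i :=
      mul_nonneg (mul_nonneg (Real.sqrt_nonneg _) hd0)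
        (pow_nonneg (mul_nonneg (Real.sqrt_nonneg _) hd0) _)
    calc Real.sqrt _ ≤ Real.sqrt ((Real.sqrt ν * d * (Real.sqrt n * d) ^ i) ^ 2) :=
          Real.sqrt_le_sqrt hsum
      _ = _ := Real.sqrt_sq hrhs
  -- bound the value of the infimand at t = R
  set F : {t : ℝ // 0 < t} → ℝ := fun t =>
    ((R + t.1) / t.1) ^ ((n : ℝ) / 2) *
      ∑ i ∈ Finset.range (n / 2 + 2),
        t.1 ^ i / (Nat.factorial i : ℝ) *
          Real.sqrt (∑ g : Fin i → Fin n,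
            ∫ ξ in K, |ξ j| ^ 2 * ∏ k : Fin i, |ξ (g k)| ^ 2) with hF
  have hF_nonneg : ∀ t, 0 ≤ F t := by
    intro t
    refine mul_nonneg (Real.rpow_nonneg (div_nonneg ?_ t.2.le) _)
      (Finset.sum_nonneg fun i _ => mul_nonneg
        (div_nonneg (pow_nonneg t.2.le _) (Nat.cast_nonneg _)) (Real.sqrt_nonneg _))
    have := t.2
    positivity
  have hinf_le : (⨅ t : {t : ℝ // 0 < t}, F t) ≤ F ⟨R, hR⟩ :=
    ciInf_le (f := F) ⟨0, by rintro y ⟨t, rfl⟩; exact hF_nonneg t⟩ ⟨R, hR⟩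
  have hFR : F ⟨R, hR⟩ ≤ (Real.sqrt 2) ^ n *
      (Real.sqrt ν * d * Real.exp (R * (Real.sqrt n * d))) := by
    have h2 : ((R + R) / R : ℝ) = 2 := by field_simp; ring
    have hrpow : ((R + R) / R : ℝ) ^ ((n : ℝ) / 2) = (Real.sqrt 2) ^ n := by
      rw [h2, Real.sqrt_eq_rpow, ← Real.rpow_natCast ((2:ℝ) ^ (1/2 : ℝ)) n,
        ← Real.rpow_mul (by norm_num)]
      norm_num
      rw [show (1 / 2 * (n:ℝ)) = (n:ℝ) / 2 by ring]
    have hsum : (∑ i ∈ Finset.range (n / 2 + 2),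
        R ^ i / (Nat.factorial i : ℝ) *
          Real.sqrt (∑ g : Fin i → Fin n,
            ∫ ξ in K, |ξ j| ^ 2 * ∏ k : Fin i, |ξ (g k)| ^ 2))
        ≤ Real.sqrt ν * d * Real.exp (R * (Real.sqrt n * d)) := by
      calc (∑ i ∈ Finset.range (n / 2 + 2),
            R ^ i / (Nat.factorial i : ℝ) *
              Real.sqrt (∑ g : Fin i → Fin n,
                ∫ ξ in K, |ξ j| ^ 2 * ∏ k : Fin i, |ξ (g k)| ^ 2))
          ≤ ∑ i ∈ Finset.range (n / 2 + 2),
              R ^ i / (Nat.factorial i : ℝ) * (Real.sqrt ν * d * (Real.sqrt n * d) ^ i) := by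
            refine Finset.sum_le_sum fun i _ => ?_
            exact mul_le_mul_of_nonneg_left (sqrt_bd i)
              (div_nonneg (pow_nonneg hR.le _) (Nat.cast_nonneg _))
        _ = Real.sqrt ν * d * ∑ i ∈ Finset.range (n / 2 + 2),
              (R * (Real.sqrt n * d)) ^ i / (Nat.factorial i : ℝ) := by
            rw [Finset.mul_sum]
            refine Finset.sum_congr rfl fun i _ => ?_
            rw [mul_pow]
            ring
        _ ≤ Real.sqrt ν * d * Real.exp (R * (Real.sqrt n * d)) := by
            refine mul_le_mul_of_nonneg_left ?_ (mul_nonneg (Real.sqrt_nonneg _) hd0)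
            exact Real.sum_le_exp_of_nonneg
              (mul_nonneg hR.le (mul_nonneg (Real.sqrt_nonneg _) hd0)) _
    rw [hF]
    simp only
    rw [hrpow]
    exact mul_le_mul_of_nonneg_left hsum (pow_nonneg (Real.sqrt_nonneg _) _)
  -- put everything together
  have hpref : 0 ≤ Real.sqrt 2 * ((n / 2 + 1 : ℕ) : ℝ) / Real.sqrt (2 * Real.pi) ^ n := by
    positivity
  calc (Real.sqrt 2 * ((n / 2 + 1 : ℕ) : ℝ) / Real.sqrt (2 * Real.pi) ^ n) *
        (⨅ t : {t : ℝ // 0 < t}, F t)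
      ≤ (Real.sqrt 2 * ((n / 2 + 1 : ℕ) : ℝ) / Real.sqrt (2 * Real.pi) ^ n) *
        ((Real.sqrt 2) ^ n * (Real.sqrt ν * d * Real.exp (R * (Real.sqrt n * d)))) :=
        mul_le_mul_of_nonneg_left (hinf_le.trans hFR) hpref
    _ = (1 / Real.sqrt Real.pi ^ n) * Real.sqrt (2 * ν) *
        ((n / 2 + 1 : ℕ) : ℝ) * d * Real.exp (R * d * Real.sqrt n) := by
        rw [show Real.sqrt (2 * Real.pi) = Real.sqrt 2 * Real.sqrt Real.pi from
            Real.sqrt_mul (by norm_num) _,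
          Real.sqrt_mul (by norm_num) ν, mul_pow,
          show R * (Real.sqrt n * d) = R * d * Real.sqrt n by ring]
        have h2 : (0:ℝ) < Real.sqrt 2 ^ n := pow_pos (Real.sqrt_pos.2 (by norm_num)) _
        have hπ : (0:ℝ) < Real.sqrt Real.pi ^ n := pow_pos (Real.sqrt_pos.2 Real.pi_pos) _
        field_simp
end

section
/- Let q_i(x,y) = ((‖x‖²−2)² + ‖y‖² − 1) e^{−(‖x‖²+‖y‖²)/2} on ℝ^{i+1}×ℝ^{n−i−1}, and W = {(x,y) : ‖x‖²+‖y‖² ≤ 5}. Then for every δ ≤ 1/2: (a) on the boundary of W, |q_i| > δ e^{−5/2} (indeed |q_i| ≥ (1/2)e^{−5/2} there); and (b) for every (x,y) ∈ W with |q_i(x,y)| < δ e^{−5/2}, the gradient satisfies ‖d_{(x,y)} q_i‖ > (e^{−5/2}/2)(2 − δ). -/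
noncomputable section

lemma stmt13_key {E : Type*} [NormedAddCommGroup E] [InnerProductSpace ℝ E] {f : E → ℝ} {m : ℝ}
    {x : E} (h : HasFDerivAt f (m • (2 • (innerSL ℝ x : E →L[ℝ] ℝ))) x) :
    2 * |m| * ‖x‖ ≤ ‖fderiv ℝ f x‖ := by
  have e : fderiv ℝ f x = m • (2 • (innerSL ℝ x : E →L[ℝ] ℝ)) := h.fderiv
  rcases eq_or_ne x 0 with h0 | h0
  · simp [h0]
  · have hx : 0 < ‖x‖ := norm_pos_iff.mpr h0
    have hle := (fderiv ℝ f x).le_opNorm x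
    have ev : fderiv ℝ f x x = 2 * m * ‖x‖ ^ 2 := by
      rw [e]
      simp [real_inner_self_eq_norm_sq]
      ring
    rw [ev] at hle
    have hn : ‖(2 * m * ‖x‖ ^ 2 : ℝ)‖ = 2 * |m| * ‖x‖ * ‖x‖ := by
      rw [Real.norm_eq_abs, abs_mul, abs_mul]
      simp [abs_of_nonneg (sq_nonneg ‖x‖ : (0:ℝ) ≤ ‖x‖^2)]
      ring
    rw [hn] at hle
    calc 2 * |m| * ‖x‖ = 2 * |m| * ‖x‖ * ‖x‖ / ‖x‖ := by field_simp
    _ ≤ ‖fderiv ℝ f x‖ * ‖x‖ / ‖x‖ := by gcongr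
    _ = ‖fderiv ℝ f x‖ := by field_simp

lemma stmt13_phideriv (c d u : ℝ) :
    HasDerivAt (fun t : ℝ => ((t - 2) ^ 2 + c - 1) * Real.exp (-(t + d) / 2))
      ((2 * (u - 2) - ((u - 2) ^ 2 + c - 1) / 2) * Real.exp (-(u + d) / 2)) u := by
  have h1 : HasDerivAt (fun t : ℝ => (t - 2) ^ 2 + c - 1) (2 * (u - 2)) u := by
    have := (((hasDerivAt_id u).sub_const 2).pow 2).add_const c
    simpa using this.sub_const 1
  have h2 : HasDerivAt (fun t : ℝ => Real.exp (-(t + d) / 2))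
      (Real.exp (-(u + d) / 2) * (-1 / 2)) u := by
    have hi : HasDerivAt (fun t : ℝ => -(t + d) / 2) (-1 / 2) u := by
      simpa using (((hasDerivAt_id u).add_const d).neg).div_const 2
    simpa using hi.exp
  have := h1.mul h2
  exact this.congr_deriv (by ring)

lemma stmt13_psideriv (c d v : ℝ) :
    HasDerivAt (fun t : ℝ => (c + t - 1) * Real.exp (-(d + t) / 2))
      ((1 - (c + v - 1) / 2) * Real.exp (-(d + v) / 2)) v := by
  have h1 : HasDerivAt (fun t : ℝ => c + t - 1) 1 v := by
    simpa using ((hasDerivAt_id v).const_add c).sub_const 1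
  have h2 : HasDerivAt (fun t : ℝ => Real.exp (-(d + t) / 2))
      (Real.exp (-(d + v) / 2) * (-1 / 2)) v := by
    have hi : HasDerivAt (fun t : ℝ => -(d + t) / 2) (-1 / 2) v := by
      simpa using (((hasDerivAt_id v).const_add d).neg).div_const 2
    simpa using hi.exp
  have := h1.mul h2
  exact this.congr_deriv (by ring)

set_option maxHeartbeats 2000000 in
lemma stmt13_arith (δ u v s1 s2 N1 N2 : ℝ) (hδ0 : 0 < δ) (hδ : δ ≤ 1 / 2)
    (hus : s1 ^ 2 = u) (hs1 : 0 ≤ s1) (hvs : s2 ^ 2 = v) (hs2 : 0 ≤ s2)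
    (hle : u + v ≤ 5)
    (hA : |(u - 2) ^ 2 + v - 1| < δ)
    (hN1 : 2 * |(2 * (u - 2) - ((u - 2) ^ 2 + v - 1) / 2) * Real.exp (-(u + v) / 2)| * s1 ≤ N1)
    (hN2 : 2 * |(1 - ((u - 2) ^ 2 + v - 1) / 2) * Real.exp (-(u + v) / 2)| * s2 ≤ N2)
    (hN1' : 0 ≤ N1) (hN2' : 0 ≤ N2) :
    Real.exp (-5 / 2) / 2 * (2 - δ) < Real.sqrt (N1 ^ 2 + N2 ^ 2) := by
  have hE0 : (0:ℝ) < Real.exp (-5 / 2) := Real.exp_pos _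
  set A : ℝ := (u - 2) ^ 2 + v - 1 with hAdef
  set E : ℝ := Real.exp (-(u + v) / 2) with hEdef
  have hE : 0 < E := Real.exp_pos _
  have hEE : Real.exp (-5 / 2) ≤ E := Real.exp_le_exp.mpr (by linarith)
  obtain ⟨hAl, hAr⟩ := abs_lt.mp hA
  have hu0 : 0 ≤ u := hus ▸ sq_nonneg s1
  have hv0 : 0 ≤ v := hvs ▸ sq_nonneg s2
  by_cases hvc : 1 / 4 ≤ v
  · -- use the second component
    have hy : (1:ℝ)/2 ≤ s2 := by nlinarith
    have h2m : 2 * |(1 - A / 2) * E| = (2 - A) * E := by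
      rw [abs_mul, abs_of_pos hE, abs_of_pos (by linarith : (0:ℝ) < 1 - A / 2)]
      ring
    rw [h2m] at hN2
    have hstep : (2 - δ) * Real.exp (-5 / 2) < (2 - A) * E := by
      calc (2 - δ) * Real.exp (-5 / 2) ≤ (2 - δ) * E :=
            mul_le_mul_of_nonneg_left hEE (by linarith)
      _ < (2 - A) * E := mul_lt_mul_of_pos_right (by linarith) hE
    have hlt : Real.exp (-5 / 2) / 2 * (2 - δ) < N2 := by
      have hpos : 0 < (2 - A) * E := mul_pos (by linarith) hE
      have h2 : (2 - A) * E * (1 / 2) ≤ (2 - A) * E * s2 :=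
        mul_le_mul_of_nonneg_left hy hpos.le
      calc Real.exp (-5 / 2) / 2 * (2 - δ) < (2 - A) * E * s2 := by linarith
      _ ≤ N2 := hN2
    calc Real.exp (-5 / 2) / 2 * (2 - δ) < N2 := hlt
    _ = Real.sqrt (N2 ^ 2) := (Real.sqrt_sq hN2').symm
    _ ≤ Real.sqrt (N1 ^ 2 + N2 ^ 2) :=
        Real.sqrt_le_sqrt (le_add_of_nonneg_left (sq_nonneg N1))
  · -- use the first component
    push_neg at hvc
    have hsq1 : (1:ℝ)/4 < (u - 2) ^ 2 := by clear hN1 hN2; linarith [hAdef ▸ hAl]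
    have hsq2 : (u - 2) ^ 2 < (3:ℝ)/2 := by clear hN1 hN2; linarith [hAdef ▸ hAr]
    have hu34 : (3:ℝ)/4 < u := by clear hN1 hN2; nlinarith
    have hx : (0.86:ℝ) < s1 := by clear hN1 hN2; nlinarith
    have hM : (3:ℝ)/2 < |4 * (u - 2) - A| := by
      clear hN1 hN2
      rcases lt_or_ge u 2 with hcase | hcase
      · have h12 : u - 2 < -(1/2) := by nlinarith
        rw [abs_of_neg (by linarith [hAdef ▸ hAl])]
        linarith [hAdef ▸ hAl]
      · have h12 : (1:ℝ)/2 < u - 2 := by nlinarith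
        rw [abs_of_pos (by linarith [hAdef ▸ hAl])]
        linarith [hAdef ▸ hAl]
    have h2m : 2 * |(2 * (u - 2) - A / 2) * E| = |4 * (u - 2) - A| * E := by
      rw [abs_mul, abs_of_pos hE]
      rw [show (2 * (u - 2) - A / 2) = (4 * (u - 2) - A) / 2 by ring, abs_div]
      rw [abs_of_pos (by norm_num : (0:ℝ) < 2)]
      ring
    rw [h2m] at hN1
    have hlt : Real.exp (-5 / 2) / 2 * (2 - δ) < N1 := by
      have h1 : (3:ℝ)/2 * Real.exp (-5 / 2) < |4 * (u - 2) - A| * E := by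
        calc (3:ℝ)/2 * Real.exp (-5 / 2) ≤ (3:ℝ)/2 * E :=
              mul_le_mul_of_nonneg_left hEE (by norm_num)
        _ < |4 * (u - 2) - A| * E := mul_lt_mul_of_pos_right hM hE
      have hpos : 0 < |4 * (u - 2) - A| * E :=
        mul_pos (lt_trans (by norm_num) hM) hE
      have h2 : |4 * (u - 2) - A| * E * (0.86:ℝ) < |4 * (u - 2) - A| * E * s1 :=
        mul_lt_mul_of_pos_left hx hpos
      calc Real.exp (-5 / 2) / 2 * (2 - δ) < |4 * (u - 2) - A| * E * s1 := by
            linarith [h1, h2, mul_pos hδ0 hE0]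
      _ ≤ N1 := hN1
    calc Real.exp (-5 / 2) / 2 * (2 - δ) < N1 := hlt
    _ = Real.sqrt (N1 ^ 2) := (Real.sqrt_sq hN1').symm
    _ ≤ Real.sqrt (N1 ^ 2 + N2 ^ 2) :=
        Real.sqrt_le_sqrt (le_add_of_nonneg_right (sq_nonneg N2))

/-- quantitative transversality of
`q_i(x,y) = ((‖x‖²−2)² + ‖y‖² − 1) e^{−(‖x‖²+‖y‖²)/2}` on `W = {‖x‖²+‖y‖² ≤ 5}`:
for every `δ ≤ 1/2`, `|q_i| ≥ (1/2)e^{−5/2}` on the boundary of `W` (hence `> δ e^{−5/2}`),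
and wherever `|q_i| < δ e^{−5/2}` inside `W` the gradient has norm `> (e^{−5/2}/2)(2−δ)`. -/
theorem stmt13 (n i : ℕ) (hn : 0 < n) (hi : i < n) (δ : ℝ) (hδ0 : 0 < δ) (hδ : δ ≤ 1 / 2)
    (q : (EuclideanSpace ℝ (Fin (i + 1)) × EuclideanSpace ℝ (Fin (n - i - 1))) → ℝ)
    (hq : q = fun p => ((‖p.1‖ ^ 2 - 2) ^ 2 + ‖p.2‖ ^ 2 - 1) *
      Real.exp (-(‖p.1‖ ^ 2 + ‖p.2‖ ^ 2) / 2)) :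
    -- (a) on the boundary sphere of W
    (∀ p : EuclideanSpace ℝ (Fin (i + 1)) × EuclideanSpace ℝ (Fin (n - i - 1)),
      ‖p.1‖ ^ 2 + ‖p.2‖ ^ 2 = 5 →
        δ * Real.exp (-5 / 2) < |q p| ∧ (1 / 2) * Real.exp (-5 / 2) ≤ |q p|) ∧
    -- (b) gradient lower bound where |q| is small inside W
    (∀ p : EuclideanSpace ℝ (Fin (i + 1)) × EuclideanSpace ℝ (Fin (n - i - 1)),
      ‖p.1‖ ^ 2 + ‖p.2‖ ^ 2 ≤ 5 → |q p| < δ * Real.exp (-5 / 2) →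
        (Real.exp (-5 / 2) / 2) * (2 - δ) <
          Real.sqrt (‖fderiv ℝ (fun x => q (x, p.2)) p.1‖ ^ 2 +
            ‖fderiv ℝ (fun y => q (p.1, y)) p.2‖ ^ 2)) := by
  have hE0 : (0:ℝ) < Real.exp (-5 / 2) := Real.exp_pos _
  constructor
  · -- part (a)
    intro p hp
    have hqp : q p = ((‖p.1‖ ^ 2 - 2) ^ 2 + ‖p.2‖ ^ 2 - 1) * Real.exp (-5 / 2) := by
      simp only [hq]
      rw [hp]
    have hA : (7:ℝ)/4 ≤ (‖p.1‖ ^ 2 - 2) ^ 2 + ‖p.2‖ ^ 2 - 1 := by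
      nlinarith [sq_nonneg (‖p.1‖ ^ 2 - 5/2)]
    have habs : |q p| = ((‖p.1‖ ^ 2 - 2) ^ 2 + ‖p.2‖ ^ 2 - 1) * Real.exp (-5 / 2) := by
      rw [hqp, abs_of_pos]
      nlinarith
    constructor
    · rw [habs]; nlinarith
    · rw [habs]; nlinarith
  · -- part (b)
    intro p hp hsmall
    simp only [hq] at hsmall ⊢
    have hE : 0 < Real.exp (-(‖p.1‖ ^ 2 + ‖p.2‖ ^ 2) / 2) := Real.exp_pos _
    have hEE : Real.exp (-5 / 2) ≤ Real.exp (-(‖p.1‖ ^ 2 + ‖p.2‖ ^ 2) / 2) :=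
      Real.exp_le_exp.mpr (by linarith)
    have hA : |(‖p.1‖ ^ 2 - 2) ^ 2 + ‖p.2‖ ^ 2 - 1| < δ := by
      rw [abs_mul, abs_of_pos hE] at hsmall
      have h1 : |(‖p.1‖ ^ 2 - 2) ^ 2 + ‖p.2‖ ^ 2 - 1| *
          Real.exp (-(‖p.1‖ ^ 2 + ‖p.2‖ ^ 2) / 2) <
          δ * Real.exp (-(‖p.1‖ ^ 2 + ‖p.2‖ ^ 2) / 2) :=
        lt_of_lt_of_le hsmall (by nlinarith)
      exact lt_of_mul_lt_mul_right h1 hE.le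
    have hD1 : HasFDerivAt (fun x : EuclideanSpace ℝ (Fin (i + 1)) =>
        ((‖x‖ ^ 2 - 2) ^ 2 + ‖p.2‖ ^ 2 - 1) * Real.exp (-(‖x‖ ^ 2 + ‖p.2‖ ^ 2) / 2))
        (((2 * (‖p.1‖ ^ 2 - 2) - ((‖p.1‖ ^ 2 - 2) ^ 2 + ‖p.2‖ ^ 2 - 1) / 2) *
            Real.exp (-(‖p.1‖ ^ 2 + ‖p.2‖ ^ 2) / 2)) • (2 • (innerSL ℝ p.1 :
          EuclideanSpace ℝ (Fin (i + 1)) →L[ℝ] ℝ))) p.1 :=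
      HasDerivAt.comp_hasFDerivAt (f := fun z : EuclideanSpace ℝ (Fin (i + 1)) => ‖z‖ ^ 2) p.1
        (stmt13_phideriv (‖p.2‖ ^ 2) (‖p.2‖ ^ 2) (‖p.1‖ ^ 2))
        (hasStrictFDerivAt_norm_sq p.1).hasFDerivAt
    have hD2 : HasFDerivAt (fun y : EuclideanSpace ℝ (Fin (n - i - 1)) =>
        ((‖p.1‖ ^ 2 - 2) ^ 2 + ‖y‖ ^ 2 - 1) * Real.exp (-(‖p.1‖ ^ 2 + ‖y‖ ^ 2) / 2))
        (((1 - ((‖p.1‖ ^ 2 - 2) ^ 2 + ‖p.2‖ ^ 2 - 1) / 2) *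
            Real.exp (-(‖p.1‖ ^ 2 + ‖p.2‖ ^ 2) / 2)) • (2 • (innerSL ℝ p.2 :
          EuclideanSpace ℝ (Fin (n - i - 1)) →L[ℝ] ℝ))) p.2 :=
      HasDerivAt.comp_hasFDerivAt (f := fun z : EuclideanSpace ℝ (Fin (n - i - 1)) => ‖z‖ ^ 2) p.2
        (stmt13_psideriv ((‖p.1‖ ^ 2 - 2) ^ 2) (‖p.1‖ ^ 2) (‖p.2‖ ^ 2))
        (hasStrictFDerivAt_norm_sq p.2).hasFDerivAt
    exact stmt13_arith δ (‖p.1‖ ^ 2) (‖p.2‖ ^ 2) ‖p.1‖ ‖p.2‖ _ _ hδ0 hδ rfl (norm_nonneg _)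
      rfl (norm_nonneg _) hp hA (stmt13_key hD1) (stmt13_key hD2) (norm_nonneg _) (norm_nonneg _)

end
end

section
/- For every n ≥ 1 and i ∈ {0,…,n−1}, the function q_i(x,y) = ((‖x‖²−2)² + ‖y‖² − 1) e^{−(‖x‖²+‖y‖²)/2} on ℝ^{i+1}×ℝ^{n−i−1} satisfies ‖q_i‖_{L²(ℝⁿ)} ≤ √(3/2) · π^{n/4} · (n+6)². -/
open MeasureTheory

open Real


noncomputable section

lemma aux_integrable_gauss (m : ℕ) {b : ℝ} (hb : 0 < b) :
    Integrable (fun x : EuclideanSpace ℝ (Fin m) => Real.exp (-b * ‖x‖ ^ 2)) := by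
  have h := (GaussianFourier.integrable_cexp_neg_mul_sq_norm_add
    (V := EuclideanSpace ℝ (Fin m)) (b := (b : ℂ)) (by simpa using hb) 0 0).norm
  refine h.congr (Filter.Eventually.of_forall fun x => ?_)
  simp [Complex.norm_exp]
  left
  norm_cast

lemma aux_integral_gauss (m : ℕ) {b : ℝ} (hb : 0 < b) :
    ∫ x : EuclideanSpace ℝ (Fin m), Real.exp (-b * ‖x‖ ^ 2)
      = (Real.pi / b) ^ ((m : ℝ) / 2) := by
  rw [GaussianFourier.integral_rexp_neg_mul_sq_norm hb]
  norm_num [finrank_euclideanSpace_fin]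

lemma aux_x4_le_exp {x : ℝ} (hx : 0 ≤ x) : x ^ 4 ≤ 24 * Real.exp x := by
  have h := Real.sum_le_exp_of_nonneg hx 5
  have h2 : x ^ 4 / (Nat.factorial 4 : ℝ) ≤ ∑ i ∈ Finset.range 5, x ^ i / (Nat.factorial i : ℝ) := by
    refine Finset.single_le_sum (f := fun i => x ^ i / (Nat.factorial i : ℝ)) ?_ (by norm_num)
    intro i _
    positivity
  simp only [Nat.factorial] at h2
  norm_num at h2
  linarith

lemma aux_exp_135 : Real.exp ((13 : ℝ)/5) ≤ 16 := by
  have h13 : Real.exp (13 : ℝ) < 16 ^ 5 := by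
    have e1 : Real.exp (13 : ℝ) = Real.exp 1 ^ 13 := by
      rw [← Real.exp_nat_mul]; norm_num
    calc Real.exp (13 : ℝ) = Real.exp 1 ^ 13 := e1
      _ < 2.7182818286 ^ 13 := by
          exact pow_lt_pow_left₀ Real.exp_one_lt_d9 (Real.exp_pos 1).le (by norm_num)
      _ < 16 ^ 5 := by norm_num
  have h5 : Real.exp ((13 : ℝ)/5) ^ 5 = Real.exp (13 : ℝ) := by
    rw [← Real.exp_nat_mul]; norm_num
  refine le_of_pow_le_pow_left₀ (n := 5) (by norm_num) (by norm_num) ?_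
  rw [h5]; linarith

set_option maxHeartbeats 1000000 in
set_option synthInstance.maxHeartbeats 400000 in
/-- `‖q_i‖_{L²(ℝⁿ)} ≤ √(3/2) π^{n/4} (n+6)²` for
`q_i(x,y) = ((‖x‖²−2)² + ‖y‖² − 1) e^{−(‖x‖²+‖y‖²)/2}` on `ℝ^{i+1} × ℝ^{n−i−1}`. -/
theorem stmt14 (n i : ℕ) (hn : 1 ≤ n) (hi : i < n)
    (q : (EuclideanSpace ℝ (Fin (i + 1)) × EuclideanSpace ℝ (Fin (n - i - 1))) → ℝ)
    (hq : q = fun p => ((‖p.1‖ ^ 2 - 2) ^ 2 + ‖p.2‖ ^ 2 - 1) *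
      Real.exp (-(‖p.1‖ ^ 2 + ‖p.2‖ ^ 2) / 2)) :
    Real.sqrt (∫ p : EuclideanSpace ℝ (Fin (i + 1)) × EuclideanSpace ℝ (Fin (n - i - 1)),
        (q p) ^ 2)
      ≤ Real.sqrt (3 / 2) * Real.pi ^ ((n : ℝ) / 4) * ((n : ℝ) + 6) ^ 2 := by
  subst hq
  have hN : (1 : ℝ) ≤ (n : ℝ) := by exact_mod_cast hn
  set N : ℝ := (n : ℝ) with hNdef
  set t : ℝ := 4 / (N + 6) with htdef
  have ht : 0 < t := by positivity
  have ht1 : t < 1 := by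
    rw [htdef, div_lt_one (by linarith)]; linarith
  set b : ℝ := 1 - t with hbdef
  have hb : 0 < b := by simp only [hbdef]; linarith
  set C : ℝ := 24 * t⁻¹ ^ 4 * Real.exp (3 * t) with hCdef
  have hC : 0 < C := by positivity
  -- pointwise bound
  have key : ∀ p : EuclideanSpace ℝ (Fin (i + 1)) × EuclideanSpace ℝ (Fin (n - i - 1)),
      (((‖p.1‖ ^ 2 - 2) ^ 2 + ‖p.2‖ ^ 2 - 1) * Real.exp (-(‖p.1‖ ^ 2 + ‖p.2‖ ^ 2) / 2)) ^ 2
        ≤ C * (Real.exp (-b * ‖p.1‖ ^ 2) * Real.exp (-b * ‖p.2‖ ^ 2)) := by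
    intro p
    set u : ℝ := ‖p.1‖ ^ 2 with hudef
    set v : ℝ := ‖p.2‖ ^ 2 with hvdef
    have hu : 0 ≤ u := by positivity
    have hv : 0 ≤ v := by positivity
    have e2 : Real.exp (-(u + v) / 2) ^ 2 = Real.exp (-(u + v)) := by
      rw [sq, ← Real.exp_add]; congr 1; ring
    have hpoly : ((u - 2) ^ 2 + v - 1) ^ 2 ≤ (u + v + 3) ^ 4 := by
      nlinarith [sq_nonneg (u + v), sq_nonneg (u - 2), mul_nonneg hu hv, sq_nonneg u,
        sq_nonneg v, mul_nonneg (mul_nonneg hu hu) hv, mul_nonneg (mul_nonneg hu hv) hv]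
    have hx : 0 ≤ t * (u + v + 3) := by positivity
    have h4 : (t * (u + v + 3)) ^ 4 ≤ 24 * Real.exp (t * (u + v + 3)) := aux_x4_le_exp hx
    have heq : (u + v + 3) ^ 4 = t⁻¹ ^ 4 * (t * (u + v + 3)) ^ 4 := by
      field_simp
    have hpoly2 : ((u - 2) ^ 2 + v - 1) ^ 2 ≤ 24 * t⁻¹ ^ 4 * Real.exp (t * (u + v + 3)) := by
      calc ((u - 2) ^ 2 + v - 1) ^ 2 ≤ (u + v + 3) ^ 4 := hpoly
        _ = t⁻¹ ^ 4 * (t * (u + v + 3)) ^ 4 := heq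
        _ ≤ t⁻¹ ^ 4 * (24 * Real.exp (t * (u + v + 3))) := by
            exact mul_le_mul_of_nonneg_left h4 (by positivity)
        _ = 24 * t⁻¹ ^ 4 * Real.exp (t * (u + v + 3)) := by ring
    have hexp : Real.exp (t * (u + v + 3)) * Real.exp (-(u + v))
        = Real.exp (3 * t) * (Real.exp (-b * u) * Real.exp (-b * v)) := by
      rw [← Real.exp_add, ← Real.exp_add, ← Real.exp_add]
      congr 1
      rw [hbdef]; ring
    calc (((u - 2) ^ 2 + v - 1) * Real.exp (-(u + v) / 2)) ^ 2
        = ((u - 2) ^ 2 + v - 1) ^ 2 * Real.exp (-(u + v)) := by rw [mul_pow, e2]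
      _ ≤ (24 * t⁻¹ ^ 4 * Real.exp (t * (u + v + 3))) * Real.exp (-(u + v)) := by
          exact mul_le_mul_of_nonneg_right hpoly2 (Real.exp_pos _).le
      _ = C * (Real.exp (-b * u) * Real.exp (-b * v)) := by
          rw [hCdef, mul_assoc, hexp]; ring
  -- integrability of the bound
  have hInt : Integrable (fun p : EuclideanSpace ℝ (Fin (i + 1)) ×
      EuclideanSpace ℝ (Fin (n - i - 1)) =>
      C * (Real.exp (-b * ‖p.1‖ ^ 2) * Real.exp (-b * ‖p.2‖ ^ 2))) := by
    have h := ((aux_integrable_gauss (i + 1) hb).mul_prod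
      (aux_integrable_gauss (n - i - 1) hb)).const_mul C
    rwa [← Measure.volume_eq_prod] at h
  -- integral comparison
  have hmono : (∫ p : EuclideanSpace ℝ (Fin (i + 1)) × EuclideanSpace ℝ (Fin (n - i - 1)),
      (((‖p.1‖ ^ 2 - 2) ^ 2 + ‖p.2‖ ^ 2 - 1) * Real.exp (-(‖p.1‖ ^ 2 + ‖p.2‖ ^ 2) / 2)) ^ 2)
      ≤ ∫ p : EuclideanSpace ℝ (Fin (i + 1)) × EuclideanSpace ℝ (Fin (n - i - 1)),
        C * (Real.exp (-b * ‖p.1‖ ^ 2) * Real.exp (-b * ‖p.2‖ ^ 2)) := by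
    exact integral_mono_of_nonneg (Filter.Eventually.of_forall fun p => sq_nonneg _) hInt
      (Filter.Eventually.of_forall key)
  -- value of bound integral
  have hval : (∫ p : EuclideanSpace ℝ (Fin (i + 1)) × EuclideanSpace ℝ (Fin (n - i - 1)),
      C * (Real.exp (-b * ‖p.1‖ ^ 2) * Real.exp (-b * ‖p.2‖ ^ 2)))
      = C * (Real.pi / b) ^ (N / 2) := by
    rw [integral_const_mul, Measure.volume_eq_prod]
    have hpm := MeasureTheory.integral_prod_mul (μ := volume) (ν := volume)
      (f := fun x : EuclideanSpace ℝ (Fin (i + 1)) => Real.exp (-b * ‖x‖ ^ 2))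
      (g := fun y : EuclideanSpace ℝ (Fin (n - i - 1)) => Real.exp (-b * ‖y‖ ^ 2))
    rw [hpm, aux_integral_gauss _ hb, aux_integral_gauss _ hb,
      ← Real.rpow_add (div_pos Real.pi_pos hb)]
    congr 2
    rw [Nat.sub_sub, Nat.cast_sub (by omega : i + 1 ≤ n)]
    push_cast
    rw [hNdef]
    ring
  -- numeric bound
  have hbval : b = (N + 2) / (N + 6) := by
    rw [hbdef, htdef]; field_simp; ring
  have hbound : C * (Real.pi / b) ^ (N / 2)
      ≤ (3 / 2) * (Real.pi ^ (N / 2) * (N + 6) ^ 4) := by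
    have hsplit : (Real.pi / b) ^ (N / 2) = Real.pi ^ (N / 2) * (b⁻¹) ^ (N / 2) := by
      rw [div_eq_mul_inv, Real.mul_rpow Real.pi_pos.le (by positivity)]
    have h1b : b⁻¹ ≤ Real.exp (t / b) := by
      have h := Real.add_one_le_exp (t / b)
      have : t / b + 1 = b⁻¹ := by
        rw [hbdef]; field_simp [(ne_of_gt (by linarith) : (1 - t) ≠ 0)]; ring
      linarith
    have hrb : (b⁻¹) ^ (N / 2) ≤ Real.exp ((t / b) * (N / 2)) := by
      rw [Real.exp_mul]
      exact Real.rpow_le_rpow (by positivity) h1b (by positivity)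
    have hexpo : 3 * t + t / b * (N / 2) ≤ 13 / 5 := by
      have h6 : (N + 6 : ℝ) ≠ 0 := by positivity
      have h2' : (N + 2 : ℝ) ≠ 0 := by positivity
      have etb : t / b = 4 / (N + 2) := by
        rw [htdef, hbval]; field_simp
      rw [htdef, etb]
      have goal_eq : 3 * (4 / (N + 6)) + 4 / (N + 2) * (N / 2)
          = (12 * (N + 2) + 2 * N * (N + 6)) / ((N + 6) * (N + 2)) := by
        field_simp; ring
      rw [goal_eq, div_le_div_iff₀ (by positivity) (by norm_num)]
      nlinarith [sq_nonneg (N - 3)]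
    have hE : Real.exp (3 * t) * Real.exp ((t / b) * (N / 2)) ≤ 16 := by
      rw [← Real.exp_add]
      exact (Real.exp_le_exp.mpr hexpo).trans aux_exp_135
    have htinv : t⁻¹ ^ 4 = (N + 6) ^ 4 / 256 := by
      rw [htdef]; field_simp; ring
    calc C * (Real.pi / b) ^ (N / 2)
        = Real.pi ^ (N / 2) * ((24 * t⁻¹ ^ 4) *
            (Real.exp (3 * t) * (b⁻¹) ^ (N / 2))) := by
          rw [hsplit, hCdef]; ring
      _ ≤ Real.pi ^ (N / 2) * ((24 * t⁻¹ ^ 4) *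
            (Real.exp (3 * t) * Real.exp ((t / b) * (N / 2)))) := by
          refine mul_le_mul_of_nonneg_left (mul_le_mul_of_nonneg_left
            (mul_le_mul_of_nonneg_left hrb (Real.exp_pos _).le) (by positivity)) (by positivity)
      _ ≤ Real.pi ^ (N / 2) * ((24 * ((N + 6) ^ 4 / 256)) * 16) := by
          refine mul_le_mul_of_nonneg_left ?_ (by positivity)
          rw [htinv]
          exact mul_le_mul_of_nonneg_left hE (by positivity)
      _ = Real.pi ^ (N / 2) * ((3 / 2) * (N + 6) ^ 4) := by ring
      _ = (3 / 2) * (Real.pi ^ (N / 2) * (N + 6) ^ 4) := by ring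
  -- conclude
  have hfinal : (∫ p : EuclideanSpace ℝ (Fin (i + 1)) × EuclideanSpace ℝ (Fin (n - i - 1)),
      (((‖p.1‖ ^ 2 - 2) ^ 2 + ‖p.2‖ ^ 2 - 1) * Real.exp (-(‖p.1‖ ^ 2 + ‖p.2‖ ^ 2) / 2)) ^ 2)
      ≤ (3 / 2) * (Real.pi ^ (N / 2) * (N + 6) ^ 4) := by
    calc _ ≤ _ := hmono
      _ = C * (Real.pi / b) ^ (N / 2) := hval
      _ ≤ _ := hbound
  have hsq : Real.sqrt ((3 / 2) * (Real.pi ^ (N / 2) * (N + 6) ^ 4))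
      = Real.sqrt (3 / 2) * Real.pi ^ (N / 4) * (N + 6) ^ 2 := by
    rw [Real.sqrt_mul (by norm_num : (0:ℝ) ≤ 3/2),
      Real.sqrt_mul (Real.rpow_nonneg Real.pi_pos.le _)]
    have h1 : Real.sqrt (Real.pi ^ (N / 2)) = Real.pi ^ (N / 4) := by
      rw [Real.sqrt_eq_rpow, ← Real.rpow_mul Real.pi_pos.le]
      congr 1; ring
    have h2 : Real.sqrt ((N + 6) ^ 4) = (N + 6) ^ 2 := by
      rw [show (N + 6) ^ 4 = ((N + 6) ^ 2) ^ 2 by ring, Real.sqrt_sq (by positivity)]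
    rw [h1, h2, mul_assoc]
  calc Real.sqrt _ ≤ Real.sqrt ((3 / 2) * (Real.pi ^ (N / 2) * (N + 6) ^ 4)) :=
        Real.sqrt_le_sqrt hfinal
    _ = Real.sqrt (3 / 2) * Real.pi ^ (N / 4) * (N + 6) ^ 2 := hsq

end
end
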